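/- arXiv:1204.2127 — 2 statements merged into one kernel-verified Lean document; each statement's English description precedes it below -/
import Mathlib

section
/- Let λ : Γ(A) → O(n) be the group homomorphism sending an affine isometry (M, b) to its linear part M. Then the image of λ is the subgroup of diagonal orthogonal matrices generated by D_1, …, D_{n−1}, it is an elementary abelian 2-group (every non-identity element has order 2), and its cardinality equals 2^r, where r is the rank of A viewed as a matrix over 𝔽₂. (This image is the holonomy group ℤ₂^r of the real Bott manifold M(A).) -/
noncomputable section

open Matrix

/-- The Euclidean group `E(n)`: pairs `(M, b)` with `M ∈ O(n)`, `b ∈ ℝⁿ`,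
acting on `ℝⁿ` by `x ↦ M x + b`. -/
@[ext]
structure EuclideanGroup (n : ℕ) where
  M : Matrix.orthogonalGroup (Fin n) ℝ
  b : Fin n → ℝ

namespace EuclideanGroup

variable {n : ℕ}

instance : Mul (EuclideanGroup n) :=
  ⟨fun g h => ⟨g.M * h.M, (g.M : Matrix (Fin n) (Fin n) ℝ) *ᵥ h.b + g.b⟩⟩

instance : One (EuclideanGroup n) := ⟨⟨1, 0⟩⟩

instance : Inv (EuclideanGroup n) :=
  ⟨fun g => ⟨g.M⁻¹, -(star (g.M : Matrix (Fin n) (Fin n) ℝ) *ᵥ g.b)⟩⟩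

@[simp] theorem mul_M (g h : EuclideanGroup n) : (g * h).M = g.M * h.M := rfl
@[simp] theorem mul_b (g h : EuclideanGroup n) :
    (g * h).b = (g.M : Matrix (Fin n) (Fin n) ℝ) *ᵥ h.b + g.b := rfl
@[simp] theorem one_M : (1 : EuclideanGroup n).M = 1 := rfl
@[simp] theorem one_b : (1 : EuclideanGroup n).b = 0 := rfl
@[simp] theorem inv_M (g : EuclideanGroup n) : g⁻¹.M = g.M⁻¹ := rfl
@[simp] theorem inv_b (g : EuclideanGroup n) :
    g⁻¹.b = -(star (g.M : Matrix (Fin n) (Fin n) ℝ) *ᵥ g.b) := rfl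

instance : Group (EuclideanGroup n) where
  mul_assoc a b c :=
    EuclideanGroup.ext (mul_assoc _ _ _)
      (by simp [Matrix.mulVec_add, Matrix.mulVec_mulVec, add_assoc])
  one_mul a := by ext <;> simp
  mul_one a := by ext <;> simp
  inv_mul_cancel a :=
    EuclideanGroup.ext (inv_mul_cancel _) (by exact add_neg_cancel _)

end EuclideanGroup


/-- A Bott matrix: a strictly upper triangular binary matrix
(entries `0` or `1`, and `A i j = 0` whenever `j ≤ i`). -/
def IsBottMatrix {n : ℕ} (A : Matrix (Fin n) (Fin n) ℕ) : Prop :=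
  (∀ i j : Fin n, A i j = 0 ∨ A i j = 1) ∧ ∀ i j : Fin n, (j : ℕ) ≤ (i : ℕ) → A i j = 0

/-- The diagonal matrix `D_i` with `(k,k)`-entry `(-1) ^ (A i k)`. -/
def Dmat {n : ℕ} (A : Matrix (Fin n) (Fin n) ℕ) (i : Fin n) : Matrix (Fin n) (Fin n) ℝ :=
  Matrix.diagonal fun k => (-1 : ℝ) ^ (A i k)

theorem diagonal_pm_mem_orthogonalGroup {n : ℕ} (d : Fin n → ℝ)
    (hd : ∀ k, d k = 1 ∨ d k = -1) :
    Matrix.diagonal d ∈ Matrix.orthogonalGroup (Fin n) ℝ := by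
  rw [Matrix.mem_orthogonalGroup_iff]
  have : (Matrix.diagonal d)ᵀ = Matrix.diagonal d := by
    simp
  rw [this, Matrix.diagonal_mul_diagonal]
  have h1 : (fun k => d k * d k) = fun _ => (1 : ℝ) :=
    funext fun k => by rcases hd k with h | h <;> simp [h]
  rw [h1, Matrix.diagonal_one]

theorem Dmat_mem {n : ℕ} (A : Matrix (Fin n) (Fin n) ℕ) (i : Fin n) :
    Dmat A i ∈ Matrix.orthogonalGroup (Fin n) ℝ := by
  refine diagonal_pm_mem_orthogonalGroup _ fun k => ?_
  rcases Nat.even_or_odd (A i k) with h | h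
  · exact Or.inl (h.neg_one_pow)
  · exact Or.inr (h.neg_one_pow)

/-- `D_i` as an element of the orthogonal group. -/
def Dorth {n : ℕ} (A : Matrix (Fin n) (Fin n) ℕ) (i : Fin n) :
    Matrix.orthogonalGroup (Fin n) ℝ :=
  ⟨Dmat A i, Dmat_mem A i⟩

/-- The generators `s_i` of the Bieberbach group of the real Bott manifold `M(A)`:
for `i` with `i + 1 < n` (i.e. the mathematical indices `1 ≤ i ≤ n - 1`),
`s_i = (D_i, (1/2) e_i)`, and the last generator (mathematical index `n`) is
`s_n = (I, e_n)`.  (Indices are `0`-based.) -/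
def sgen {n : ℕ} (A : Matrix (Fin n) (Fin n) ℕ) (i : Fin n) : EuclideanGroup n :=
  if (i : ℕ) + 1 = n then ⟨1, Pi.single i 1⟩
  else ⟨Dorth A i, Pi.single i (1 / 2 : ℝ)⟩

/-- The fundamental group `Γ(A)` of the real Bott manifold `M(A)`, as the subgroup
of `E(n)` generated by `s_1, …, s_n`. -/
def BottGroup {n : ℕ} (A : Matrix (Fin n) (Fin n) ℕ) : Subgroup (EuclideanGroup n) :=
  Subgroup.closure (Set.range (sgen A))

theorem sgen_mem {n : ℕ} (A : Matrix (Fin n) (Fin n) ℕ) (i : Fin n) :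
    sgen A i ∈ BottGroup A :=
  Subgroup.subset_closure (Set.mem_range_self i)

/-- The homomorphism sending an affine isometry `(M, b)` to its linear part `M`. -/
def linearPart (n : ℕ) : EuclideanGroup n →* Matrix.orthogonalGroup (Fin n) ℝ where
  toFun g := g.M
  map_one' := rfl
  map_mul' _ _ := rfl

namespace BottAux

open Matrix

lemma neg_one_pow_mod_two (m : ℕ) : (-1 : ℝ) ^ (m % 2) = (-1 : ℝ) ^ m := by
  conv_rhs => rw [← Nat.div_add_mod m 2]
  rw [pow_add, pow_mul, neg_one_sq, one_pow, one_mul]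

lemma neg_one_pow_val_add (a b : ZMod 2) :
    (-1 : ℝ) ^ ((a + b).val) = (-1 : ℝ) ^ a.val * (-1 : ℝ) ^ b.val := by
  rw [ZMod.val_add, neg_one_pow_mod_two, pow_add]

/-- The homomorphism `(ZMod 2)^n → O(n)` sending `v` to the diagonal matrix with
entries `(-1)^(v k)`. -/
def phi (n : ℕ) : Multiplicative (Fin n → ZMod 2) →* Matrix.orthogonalGroup (Fin n) ℝ where
  toFun v := ⟨Matrix.diagonal fun k => (-1 : ℝ) ^ ((Multiplicative.toAdd v) k).val,
    diagonal_pm_mem_orthogonalGroup _ (fun k => by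
      rcases Nat.even_or_odd ((Multiplicative.toAdd v) k).val with h | h
      · exact Or.inl h.neg_one_pow
      · exact Or.inr h.neg_one_pow)⟩
  map_one' := by
    apply Subtype.ext
    show Matrix.diagonal _ = (1 : Matrix (Fin n) (Fin n) ℝ)
    simp
  map_mul' v w := by
    apply Subtype.ext
    show Matrix.diagonal _ = Matrix.diagonal _ * Matrix.diagonal _
    rw [Matrix.diagonal_mul_diagonal]
    exact congrArg Matrix.diagonal (funext fun k => neg_one_pow_val_add _ _)

lemma phi_injective (n : ℕ) : Function.Injective (phi n) := by
  rw [injective_iff_map_eq_one]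
  intro v hv
  have h : Matrix.diagonal (fun k => (-1 : ℝ) ^ ((Multiplicative.toAdd v) k).val)
      = (1 : Matrix (Fin n) (Fin n) ℝ) := congrArg Subtype.val hv
  have hz : Multiplicative.toAdd v = 0 := by
    funext k
    have hkk : (-1 : ℝ) ^ ((Multiplicative.toAdd v) k).val = 1 := by
      have := congrFun (congrFun h k) k
      simpa [Matrix.diagonal_apply_eq, Matrix.one_apply_eq] using this
    have hval : ((Multiplicative.toAdd v) k).val = 0 := by
      by_contra hne
      have hlt := ZMod.val_lt ((Multiplicative.toAdd v) k)
      have h1 : ((Multiplicative.toAdd v) k).val = 1 := by omega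
      rw [h1, pow_one] at hkk
      norm_num at hkk
    exact (ZMod.val_eq_zero _).mp hval
  have hv0 : v = Multiplicative.ofAdd 0 := by
    rw [← hz]
    rfl
  simpa using hv0

/-- The subgroup of `Multiplicative ((ZMod 2)^n)` corresponding to the row space of `B`. -/
def spanSubgroup {n : ℕ} (B : Matrix (Fin n) (Fin n) (ZMod 2)) :
    Subgroup (Multiplicative (Fin n → ZMod 2)) where
  carrier := Multiplicative.toAdd ⁻¹'
    ((Submodule.span (ZMod 2) (Set.range B) : Submodule (ZMod 2) (Fin n → ZMod 2)) :
      Set (Fin n → ZMod 2))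
  mul_mem' ha hb := (Submodule.span (ZMod 2) (Set.range B)).add_mem ha hb
  one_mem' := (Submodule.span (ZMod 2) (Set.range B)).zero_mem
  inv_mem' ha := (Submodule.span (ZMod 2) (Set.range B)).neg_mem ha

lemma mem_spanSubgroup {n : ℕ} (B : Matrix (Fin n) (Fin n) (ZMod 2))
    (v : Multiplicative (Fin n → ZMod 2)) :
    v ∈ spanSubgroup B ↔ Multiplicative.toAdd v ∈ Submodule.span (ZMod 2) (Set.range B) :=
  Iff.rfl

lemma Dorth_eq_phi {n : ℕ} (A : Matrix (Fin n) (Fin n) ℕ) (i : Fin n) :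
    Dorth A i = phi n (Multiplicative.ofAdd ((A.map fun a => (a : ZMod 2)) i)) := by
  apply Subtype.ext
  show Matrix.diagonal _ = Matrix.diagonal _
  refine congrArg Matrix.diagonal (funext fun k => ?_)
  show (-1 : ℝ) ^ (A i k) = (-1 : ℝ) ^ (((A i k : ℕ) : ZMod 2)).val
  rw [ZMod.val_natCast, neg_one_pow_mod_two]

lemma row_last_eq_zero {n : ℕ} (A : Matrix (Fin n) (Fin n) ℕ) (hA : IsBottMatrix A)
    (i : Fin n) (hi : ¬ (i : ℕ) + 1 < n) : (A.map fun a => (a : ZMod 2)) i = 0 := by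
  funext k
  have hk : (k : ℕ) ≤ (i : ℕ) := by
    have := i.isLt
    have := k.isLt
    omega
  show ((A i k : ℕ) : ZMod 2) = 0
  rw [hA.2 i k hk]
  simp

lemma closure_Dorth {n : ℕ} (A : Matrix (Fin n) (Fin n) ℕ) (hA : IsBottMatrix A) :
    Subgroup.closure
        {D : Matrix.orthogonalGroup (Fin n) ℝ |
          ∃ i : Fin n, (i : ℕ) + 1 < n ∧ D = Dorth A i}
      = Subgroup.map (phi n) (spanSubgroup (A.map fun a => (a : ZMod 2))) := by
  set B := A.map fun a => (a : ZMod 2) with hB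
  apply le_antisymm
  · rw [Subgroup.closure_le]
    rintro D ⟨i, hi, rfl⟩
    exact ⟨Multiplicative.ofAdd (B i),
      (mem_spanSubgroup B _).mpr (Submodule.subset_span ⟨i, rfl⟩),
      (Dorth_eq_phi A i).symm⟩
  · rintro x ⟨v, hv, rfl⟩
    have hv' : Multiplicative.toAdd v ∈ Submodule.span (ZMod 2) (Set.range B) := hv
    have key : ∀ w, w ∈ Submodule.span (ZMod 2) (Set.range B) →
        phi n (Multiplicative.ofAdd w) ∈ Subgroup.closure
          {D : Matrix.orthogonalGroup (Fin n) ℝ |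
            ∃ i : Fin n, (i : ℕ) + 1 < n ∧ D = Dorth A i} := by
      intro w hw
      induction hw using Submodule.span_induction with
      | mem x hx =>
        obtain ⟨i, rfl⟩ := hx
        by_cases hi : (i : ℕ) + 1 < n
        · exact Subgroup.subset_closure ⟨i, hi, (Dorth_eq_phi A i).symm⟩
        · have hBi : B i = 0 := row_last_eq_zero A hA i hi
          rw [hBi]
          simpa using (Subgroup.closure _).one_mem
      | zero => simpa using (Subgroup.closure _).one_mem
      | add x y hx hy px py =>
        have : phi n (Multiplicative.ofAdd (x + y))
            = phi n (Multiplicative.ofAdd x) * phi n (Multiplicative.ofAdd y) := by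
          rw [← _root_.map_mul]
          rfl
        rw [this]
        exact Subgroup.mul_mem _ px py
      | smul c x hx px =>
        have hall : ∀ a : ZMod 2, a = 0 ∨ a = 1 := by decide
        rcases hall c with rfl | rfl
        · rw [zero_smul]
          simpa using (Subgroup.closure _).one_mem
        · rw [one_smul]; exact px
    have := key (Multiplicative.toAdd v) hv'
    simpa using this

lemma phi_sq (n : ℕ) (v : Multiplicative (Fin n → ZMod 2)) : phi n v ^ 2 = 1 := by
  have hvv : v * v = 1 := by
    have h0 : Multiplicative.toAdd v + Multiplicative.toAdd v = 0 := by
      funext k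
      have hall : ∀ a : ZMod 2, a + a = 0 := by decide
      exact hall _
    have h2 : v * v = Multiplicative.ofAdd (Multiplicative.toAdd v + Multiplicative.toAdd v) :=
      rfl
    rw [h2, h0]
    rfl
  rw [pow_two, ← _root_.map_mul, hvv, _root_.map_one]

lemma card_spanSubgroup {n : ℕ} (B : Matrix (Fin n) (Fin n) (ZMod 2)) :
    Nat.card (spanSubgroup B) = 2 ^ B.rank := by
  classical
  have e : spanSubgroup B ≃
      (Submodule.span (ZMod 2) (Set.range B) : Submodule (ZMod 2) (Fin n → ZMod 2)) :=
    { toFun := fun x => ⟨Multiplicative.toAdd x.1, x.2⟩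
      invFun := fun y => ⟨Multiplicative.ofAdd y.1, y.2⟩
      left_inv := fun _ => rfl
      right_inv := fun _ => rfl }
  rw [Nat.card_congr e]
  have : Fintype (Submodule.span (ZMod 2) (Set.range B) : Submodule (ZMod 2) (Fin n → ZMod 2)) :=
    Fintype.ofFinite _
  rw [Nat.card_eq_fintype_card]
  have hcard := Module.card_eq_pow_finrank (K := ZMod 2)
    (V := (Submodule.span (ZMod 2) (Set.range B) : Submodule (ZMod 2) (Fin n → ZMod 2)))
  rw [hcard, ZMod.card]
  congr 1
  rw [Matrix.rank_eq_finrank_span_row]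
  rfl

end BottAux

/-- The image of the linear-part homomorphism `λ : Γ(A) → O(n)` (the
holonomy group of `M(A)`) is the subgroup of diagonal orthogonal matrices generated by
`D_1, …, D_{n-1}`, every non-identity element of it has order `2`, and its cardinality is
`2^r` where `r = rank_{𝔽₂} A`. -/
theorem holonomy_eq_closure_D (n : ℕ) (hn : 2 ≤ n)
    (A : Matrix (Fin n) (Fin n) ℕ) (hA : IsBottMatrix A) :
    Subgroup.map (linearPart n) (BottGroup A) =
      Subgroup.closure
        {D : Matrix.orthogonalGroup (Fin n) ℝ |
          ∃ i : Fin n, (i : ℕ) + 1 < n ∧ D = Dorth A i} ∧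
    (∀ x ∈ Subgroup.map (linearPart n) (BottGroup A), x ≠ 1 → orderOf x = 2) ∧
    Nat.card (Subgroup.map (linearPart n) (BottGroup A)) =
      2 ^ (A.map fun a => (a : ZMod 2)).rank := by
  classical
  have hpart1 : Subgroup.map (linearPart n) (BottGroup A)
      = Subgroup.closure {D : Matrix.orthogonalGroup (Fin n) ℝ |
          ∃ i : Fin n, (i : ℕ) + 1 < n ∧ D = Dorth A i} := by
    rw [BottGroup, MonoidHom.map_closure]
    apply le_antisymm
    · rw [Subgroup.closure_le]
      rintro D ⟨g, ⟨i, rfl⟩, rfl⟩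
      by_cases hi : (i : ℕ) + 1 = n
      · have h1 : linearPart n (sgen A i) = 1 := by
          simp only [sgen, if_pos hi]
          rfl
        rw [h1]
        exact Subgroup.one_mem _
      · have h1 : linearPart n (sgen A i) = Dorth A i := by
          simp only [sgen, if_neg hi]
          rfl
        rw [h1]
        exact Subgroup.subset_closure ⟨i, by have := i.isLt; omega, rfl⟩
    · rw [Subgroup.closure_le]
      rintro D ⟨i, hi, rfl⟩
      apply Subgroup.subset_closure
      refine ⟨sgen A i, ⟨i, rfl⟩, ?_⟩
      have hi' : ¬ (i : ℕ) + 1 = n := by omega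
      simp only [sgen, if_neg hi']
      rfl
  rw [hpart1]
  refine ⟨rfl, ?_, ?_⟩
  · rw [BottAux.closure_Dorth A hA]
    rintro x ⟨v, hv, rfl⟩ hx
    exact orderOf_eq_prime (BottAux.phi_sq n v) hx
  · rw [BottAux.closure_Dorth A hA]
    rw [Nat.card_congr
      (Subgroup.equivMapOfInjective _ (BottAux.phi n) (BottAux.phi_injective n)).toEquiv.symm]
    exact BottAux.card_spanSubgroup _
end
end

section
/- The image of the linear-part homomorphism λ : Γ(A) → O(n) (the holonomy group of M(A)) has order 2^{n−1} if and only if all superdiagonal entries of A equal 1, i.e. a_{i,i+1} = 1 for every 1 ≤ i ≤ n−1. (Equivalently: the real Bott manifold M(A) is a generalized Hantzsche–Wendt manifold if and only if a_{1,2}a_{2,3}⋯a_{n−1,n} = 1.) -/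
noncomputable section

open Matrix

namespace HolonomyAux

/-- The sign character `ZMod 2 → ℝ`. -/
def chi (x : ZMod 2) : ℝ := if x = 0 then 1 else -1

lemma chi_zero : chi 0 = 1 := by simp [chi]

lemma chi_one : chi 1 = -1 := by norm_num [chi]

lemma chi_cases (x : ZMod 2) : chi x = 1 ∨ chi x = -1 := by
  unfold chi; split <;> simp

lemma zmod2_cases : ∀ c : ZMod 2, c = 0 ∨ c = 1 := by decide

lemma chi_add (a b : ZMod 2) : chi (a + b) = chi a * chi b := by
  rcases zmod2_cases a with rfl | rfl <;> rcases zmod2_cases b with rfl | rfl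
  · rw [add_zero, chi_zero, one_mul]
  · rw [zero_add, chi_zero, one_mul]
  · rw [add_zero, chi_zero, mul_one]
  · rw [show (1 + 1 : ZMod 2) = 0 from by decide, chi_zero, chi_one]
    norm_num

lemma chi_injective : Function.Injective chi := by
  intro a b h
  rcases zmod2_cases a with rfl | rfl <;> rcases zmod2_cases b with rfl | rfl
  · rfl
  · rw [chi_zero, chi_one] at h; norm_num at h
  · rw [chi_one, chi_zero] at h; norm_num at h
  · rfl

/-- The group homomorphism `(ZMod 2)ⁿ → O(n)` sending `v` to the diagonal sign matrix. -/
def Fhom (n : ℕ) : Multiplicative (Fin n → ZMod 2) →* Matrix.orthogonalGroup (Fin n) ℝ where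
  toFun v := ⟨Matrix.diagonal fun k => chi (Multiplicative.toAdd v k),
    diagonal_pm_mem_orthogonalGroup _ fun k => chi_cases _⟩
  map_one' := by
    apply Subtype.ext
    show Matrix.diagonal
        (fun k => chi (Multiplicative.toAdd (1 : Multiplicative (Fin n → ZMod 2)) k)) = _
    rw [show (fun k : Fin n =>
        chi (Multiplicative.toAdd (1 : Multiplicative (Fin n → ZMod 2)) k)) = fun _ => (1 : ℝ)
      from funext fun k => chi_zero, Matrix.diagonal_one]
    rfl
  map_mul' v w := by
    apply Subtype.ext
    show Matrix.diagonal _ = Matrix.diagonal _ * Matrix.diagonal _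
    rw [Matrix.diagonal_mul_diagonal]
    exact congrArg _ (funext fun k => chi_add _ _)

lemma Fhom_injective (n : ℕ) : Function.Injective (Fhom n) := by
  intro v w h
  have h2 : Matrix.diagonal (fun k => chi (Multiplicative.toAdd v k))
      = Matrix.diagonal (fun k => chi (Multiplicative.toAdd w k)) := congrArg Subtype.val h
  have h3 := Matrix.diagonal_injective h2
  have h4 : Multiplicative.toAdd v = Multiplicative.toAdd w :=
    funext fun k => chi_injective (congrFun h3 k)
  exact Multiplicative.toAdd.injective h4

/-- The rows of `A` reduced mod 2. -/
def rowVec {n : ℕ} (A : Matrix (Fin n) (Fin n) ℕ) (i : Fin n) : Fin n → ZMod 2 :=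
  fun k => (A i k : ZMod 2)

lemma linearPart_sgen {n : ℕ} (A : Matrix (Fin n) (Fin n) ℕ) (hA : IsBottMatrix A) (i : Fin n) :
    linearPart n (sgen A i) = Fhom n (Multiplicative.ofAdd (rowVec A i)) := by
  have hD : Dorth A i = Fhom n (Multiplicative.ofAdd (rowVec A i)) := by
    apply Subtype.ext
    show Dmat A i = Matrix.diagonal _
    unfold Dmat
    refine congrArg _ (funext fun k => ?_)
    rcases hA.1 i k with h | h <;>
      simp [h, rowVec, chi_zero, chi_one]
  show (sgen A i).M = _
  unfold sgen
  split
  · rename_i hlast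
    have h0 : rowVec A i = 0 := by
      funext k
      have hk : (k : ℕ) ≤ (i : ℕ) := by omega
      simp [rowVec, hA.2 i k hk]
    rw [h0]
    show (1 : Matrix.orthogonalGroup (Fin n) ℝ) = _
    exact ((Fhom n).map_one).symm
  · exact hD

/-- The submodule of vectors vanishing in coordinates `≤ p + 1`. -/
def lowZero (n p : ℕ) : Submodule (ZMod 2) (Fin n → ZMod 2) where
  carrier := {v | ∀ k : Fin n, (k : ℕ) ≤ p + 1 → v k = 0}
  add_mem' := by
    intro v w hv hw k hk
    show v k + w k = 0
    rw [hv k hk, hw k hk, add_zero]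
  zero_mem' := fun k _ => rfl
  smul_mem' := by
    intro c v hv k hk
    show c • v k = 0
    rw [hv k hk, smul_zero]

lemma lowZero_finrank_le (n p : ℕ) (h : p + 2 ≤ n) :
    Module.finrank (ZMod 2) (lowZero n p) ≤ n - p - 2 := by
  let L : lowZero n p →ₗ[ZMod 2] (Fin (n - p - 2) → ZMod 2) :=
    { toFun := fun v t => v.1 ⟨p + 2 + (t : ℕ), by omega⟩
      map_add' := fun v w => rfl
      map_smul' := fun c v => rfl }
  have hinj : Function.Injective L := by
    intro v w hvw
    apply Subtype.ext
    funext k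
    by_cases hk : (k : ℕ) ≤ p + 1
    · rw [v.2 k hk, w.2 k hk]
    · have ht : (k : ℕ) - (p + 2) < n - p - 2 := by omega
      have h5 := congrFun hvw ⟨(k : ℕ) - (p + 2), ht⟩
      have hk2 : (⟨p + 2 + ((k : ℕ) - (p + 2)), by omega⟩ : Fin n) = k :=
        Fin.ext (by simp; omega)
      show v.1 k = w.1 k
      rw [← hk2]
      exact h5
  calc Module.finrank (ZMod 2) (lowZero n p)
      ≤ Module.finrank (ZMod 2) (Fin (n - p - 2) → ZMod 2) :=
        LinearMap.finrank_le_finrank_of_injective hinj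
    _ = n - p - 2 := by rw [Module.finrank_fintype_fun_eq_card, Fintype.card_fin]

end HolonomyAux

open HolonomyAux

/-- The holonomy group of `M(A)` (the image of the linear-part
homomorphism on `Γ(A)`) has order `2^{n-1}` if and only if all superdiagonal entries of
`A` equal `1`; i.e. `M(A)` is a generalized Hantzsche–Wendt manifold iff
`a_{1,2} a_{2,3} ⋯ a_{n-1,n} = 1`. -/
theorem holonomy_card_eq_iff_superdiagonal (n : ℕ) (hn : 2 ≤ n)
    (A : Matrix (Fin n) (Fin n) ℕ) (hA : IsBottMatrix A) :
    Nat.card (Subgroup.map (linearPart n) (BottGroup A)) = 2 ^ (n - 1) ↔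
      ∀ (i : Fin n) (h : (i : ℕ) + 1 < n), A i ⟨(i : ℕ) + 1, h⟩ = 1 := by
  classical
  obtain ⟨hA01, hAtri⟩ := hA
  set r : Fin n → (Fin n → ZMod 2) := rowVec A with hr
  set S : Set (Multiplicative (Fin n → ZMod 2)) :=
    Set.range (fun i => Multiplicative.ofAdd (r i)) with hS
  -- Step 1: the holonomy group is the image under `Fhom` of the closure of the rows.
  have hmap : Subgroup.map (linearPart n) (BottGroup A)
      = Subgroup.map (Fhom n) (Subgroup.closure S) := by
    rw [BottGroup, MonoidHom.map_closure, MonoidHom.map_closure, ← Set.range_comp,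
      ← Set.range_comp]
    exact congrArg _ (congrArg _ (funext fun i => linearPart_sgen A ⟨hA01, hAtri⟩ i))
  -- Step 2: transfer cardinality through the injective `Fhom`.
  have hcard1 : Nat.card (Subgroup.map (linearPart n) (BottGroup A))
      = Nat.card (Subgroup.closure S) := by
    rw [hmap]
    exact (Nat.card_congr ((Subgroup.closure S).equivMapOfInjective _
      (Fhom_injective n)).toEquiv).symm
  -- Step 3: the closure equals the `ZMod 2`-span of the rows.
  set V : Submodule (ZMod 2) (Fin n → ZMod 2) := Submodule.span (ZMod 2) (Set.range r) with hV
  have hmem : ∀ x : Multiplicative (Fin n → ZMod 2),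
      x ∈ Subgroup.closure S ↔ Multiplicative.toAdd x ∈ V := by
    intro x
    constructor
    · intro hx
      refine Subgroup.closure_induction ?_ ?_ ?_ ?_ hx
      · rintro y ⟨i, rfl⟩
        exact Submodule.subset_span ⟨i, rfl⟩
      · exact V.zero_mem
      · intro a b _ _ ha hb
        exact V.add_mem ha hb
      · intro a _ ha
        exact V.neg_mem ha
    · intro hx
      have key : ∀ y, y ∈ V → Multiplicative.ofAdd y ∈ Subgroup.closure S := by
        intro y hy
        refine Submodule.span_induction
          (p := fun z _ => Multiplicative.ofAdd z ∈ Subgroup.closure S) ?_ ?_ ?_ ?_ hy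
        · rintro z ⟨i, rfl⟩
          exact Subgroup.subset_closure ⟨i, rfl⟩
        · exact one_mem _
        · intro a b _ _ ha hb
          exact mul_mem ha hb
        · intro c z _ hz
          rcases zmod2_cases c with rfl | rfl
          · rw [zero_smul]
            exact one_mem _
          · rw [one_smul]
            exact hz
      exact key _ hx
  have hcard2 : Nat.card (Subgroup.closure S) = Nat.card V :=
    Nat.card_congr (Equiv.subtypeEquiv Multiplicative.toAdd hmem)
  -- Step 4: replace the spanning family by the first `n - 1` rows.
  set b : Fin (n - 1) → (Fin n → ZMod 2) :=
    (fun j => r (Fin.castLE (Nat.sub_le n 1) j)) with hb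
  have hVb : V = Submodule.span (ZMod 2) (Set.range b) := by
    apply le_antisymm
    · rw [hV, Submodule.span_le]
      rintro x ⟨i, rfl⟩
      by_cases hi : (i : ℕ) < n - 1
      · have : r i = b ⟨(i : ℕ), hi⟩ := by
          rw [hb]
          exact congrArg r (Fin.ext rfl).symm
        rw [this]
        exact Submodule.subset_span ⟨_, rfl⟩
      · have h0 : r i = 0 := by
          funext k
          have hk : (k : ℕ) ≤ (i : ℕ) := by omega
          simp [hr, rowVec, hAtri i k hk]
        rw [h0]
        exact Submodule.zero_mem _
    · refine Submodule.span_mono ?_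
      rintro x ⟨j, rfl⟩
      exact ⟨_, rfl⟩
  -- Step 5: cardinality of a `ZMod 2`-submodule is `2 ^ finrank`.
  have hpow : ∀ W : Submodule (ZMod 2) (Fin n → ZMod 2),
      Nat.card W = 2 ^ Module.finrank (ZMod 2) W := by
    intro W
    have : Fintype W := Fintype.ofFinite W
    rw [Nat.card_eq_fintype_card, Module.card_eq_pow_finrank (K := ZMod 2), ZMod.card]
  -- Step 6: reduce to linear independence of `b`.
  have hLIiff : Nat.card V = 2 ^ (n - 1) ↔ LinearIndependent (ZMod 2) b := by
    rw [hVb, hpow, (Nat.pow_right_injective (le_refl 2)).eq_iff,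
      linearIndependent_iff_card_eq_finrank_span, Set.finrank, Fintype.card_fin]
    exact eq_comm
  rw [hcard1, hcard2, hLIiff]
  -- Step 7: linear independence ↔ superdiagonal entries all equal 1.
  constructor
  · -- (⇒) if some superdiagonal entry vanishes, we get too many vectors in `lowZero`.
    intro hLI i₀ hi
    by_contra hne
    have hz : A i₀ ⟨(i₀ : ℕ) + 1, hi⟩ = 0 := (hA01 i₀ _).resolve_right hne
    set p := (i₀ : ℕ) with hp
    have hp2 : p + 2 ≤ n := by omega
    have hmemW : ∀ t : Fin (n - 1 - p), b ⟨p + (t : ℕ), by omega⟩ ∈ lowZero n p := by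
      intro t k hk
      show (A (Fin.castLE (Nat.sub_le n 1) ⟨p + (t : ℕ), by omega⟩) k : ZMod 2) = 0
      by_cases hkt : (k : ℕ) ≤ p + (t : ℕ)
      · rw [hAtri _ k hkt]
        simp
      · have ht0 : (t : ℕ) = 0 ∧ (k : ℕ) = p + 1 := by omega
        have hrow : (Fin.castLE (Nat.sub_le n 1) ⟨p + (t : ℕ), by omega⟩ : Fin n) = i₀ :=
          Fin.ext (by simp [ht0.1, hp])
        have hcol : k = (⟨p + 1, by omega⟩ : Fin n) := Fin.ext ht0.2
        rw [hrow, hcol, hz]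
        simp
    set u : Fin (n - 1 - p) → lowZero n p :=
      (fun t => ⟨b ⟨p + (t : ℕ), by omega⟩, hmemW t⟩) with hu_def
    have hcomp : LinearIndependent (ZMod 2)
        (b ∘ fun t : Fin (n - 1 - p) => (⟨p + (t : ℕ), by omega⟩ : Fin (n - 1))) := by
      refine hLI.comp _ ?_
      intro s t hst
      have := congrArg Fin.val hst
      simp only [] at this
      exact Fin.ext (by omega)
    have hu : LinearIndependent (ZMod 2) u :=
      LinearIndependent.of_comp (lowZero n p).subtype hcomp
    have hcard := hu.fintype_card_le_finrank
    rw [Fintype.card_fin] at hcard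
    have hfr := lowZero_finrank_le n p hp2
    omega
  · -- (⇐) all superdiagonal entries are 1: independence by a minimal-index argument.
    intro hcond
    rw [Fintype.linearIndependent_iff]
    intro g hg
    have key : ∀ m : ℕ, ∀ hm : m < n - 1, g ⟨m, hm⟩ = 0 := by
      intro m
      induction m using Nat.strong_induction_on with
      | _ m IH =>
        intro hm
        have hm1 : m + 1 < n := by omega
        have hg1 := congrFun hg ⟨m + 1, hm1⟩
        rw [Finset.sum_apply] at hg1
        have hsingle : ∀ j ∈ Finset.univ, j ≠ (⟨m, hm⟩ : Fin (n - 1)) →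
            (g j • b j) ⟨m + 1, hm1⟩ = 0 := by
          intro j _ hj
          rcases lt_or_gt_of_ne (fun h => hj (Fin.ext h)) with hlt | hgt
          · have : g j = 0 := by
              have := IH (j : ℕ) hlt j.isLt
              rwa [show (⟨(j : ℕ), j.isLt⟩ : Fin (n - 1)) = j from Fin.ext rfl] at this
            rw [this, zero_smul]
            rfl
          · have hAj : A (Fin.castLE (Nat.sub_le n 1) j) ⟨m + 1, hm1⟩ = 0 :=
              hAtri _ _ (by simpa using hgt)
            show g j • b j ⟨m + 1, hm1⟩ = 0
            rw [show b j ⟨m + 1, hm1⟩ = 0 by simp [hb, hr, rowVec, hAj], smul_zero]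
        rw [Finset.sum_eq_single_of_mem _ (Finset.mem_univ _) hsingle] at hg1
        have hb1 : b ⟨m, hm⟩ ⟨m + 1, hm1⟩ = 1 := by
          have hc := hcond (Fin.castLE (Nat.sub_le n 1) ⟨m, hm⟩) (by simpa using hm1)
          simp only [hb, hr, rowVec]
          rw [show (⟨(Fin.castLE (Nat.sub_le n 1) ⟨m, hm⟩ : Fin n) + 1, _⟩ : Fin n)
              = ⟨m + 1, hm1⟩ from Fin.ext rfl] at hc
          rw [hc]
          simp
        have : g ⟨m, hm⟩ • b ⟨m, hm⟩ ⟨m + 1, hm1⟩ = g ⟨m, hm⟩ := by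
          rw [hb1, smul_eq_mul, mul_one]
        rw [show (g ⟨m, hm⟩ • b ⟨m, hm⟩) ⟨m + 1, hm1⟩
            = g ⟨m, hm⟩ • b ⟨m, hm⟩ ⟨m + 1, hm1⟩ from rfl, this] at hg1
        have h0 : (0 : Fin n → ZMod 2) ⟨m + 1, hm1⟩ = 0 := rfl
        rw [h0] at hg1
        exact hg1
    intro i
    have := key (i : ℕ) i.isLt
    rwa [show (⟨(i : ℕ), i.isLt⟩ : Fin (n - 1)) = i from Fin.ext rfl] at this
end
end
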